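/- Let n ≥ 1, let 0 < a < b be real numbers, and let N ∈ ℕ. For every Schwartz function ψ : ℝⁿ → ℂ whose Fourier transform 𝓕ψ vanishes at every ξ with ‖ξ‖ < a or ‖ξ‖ > b, there exist constants C > 0 and c > 0 such that for every t ≥ 0 and every x ∈ ℝⁿ: |∫_{ℝⁿ} e^{−t‖ξ‖²} (𝓕ψ)(ξ) e^{2πi⟨x,ξ⟩} dξ| ≤ C · e^{−c t} · (1 + ‖x‖)^{−N}. (That is, the heat evolution of a frequency-annulus-localized Schwartz function decays exponentially in time and polynomially in space, with polynomial rate of any prescribed order.) -/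

import Mathlib

set_option maxHeartbeats 2000000
set_option synthInstance.maxHeartbeats 1000000

open MeasureTheory FourierTransform


open MeasureTheory SchwartzMap FourierTransform

section Aux

variable {E : Type*} [NormedAddCommGroup E] [NormedSpace ℝ E]

lemma idDerivBound (m : ℕ) (y : E) :
    ‖iteratedFDeriv ℝ m (fun z : E => z) y‖ ≤ max 1 ‖y‖ := by
  match m with
  | 0 => rw [norm_iteratedFDeriv_zero]; exact le_max_right _ _
  | 1 =>
    refine le_trans ?_ (le_max_left _ _)
    refine ContinuousMultilinearMap.opNorm_le_bound zero_le_one fun v => ?_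
    rw [iteratedFDeriv_one_apply, fderiv_id']
    simp
  | (m+2) =>
    have h1 : fderiv ℝ (fun z : E => z) = fun _ : E => ContinuousLinearMap.id ℝ E :=
      funext fun z => fderiv_id'
    rw [← norm_iteratedFDeriv_fderiv, h1, iteratedFDeriv_const_of_ne (Nat.succ_ne_zero m)]
    simp

end Aux

section Aux2

variable {E : Type*} [NormedAddCommGroup E] [InnerProductSpace ℝ E]

lemma nsqDerivBound (j : ℕ) (x : E) :
    ‖iteratedFDeriv ℝ j (fun y : E => ‖y‖ ^ 2) x‖ ≤
      ‖(innerSL ℝ : E →L[ℝ] E →L[ℝ] ℝ)‖ * 2 ^ j * (max 1 ‖x‖) ^ 2 := by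
  have hrw : (fun y : E => ‖y‖ ^ 2) = fun y : E => (innerSL ℝ) y y := by
    funext y; rw [innerSL_apply_apply, real_inner_self_eq_norm_sq]
  rw [hrw]
  have h := (innerSL ℝ (E := E)).norm_iteratedFDeriv_le_of_bilinear
    (f := fun y : E => y) (g := fun y : E => y) contDiff_id contDiff_id x (n := j) le_top
  refine h.trans ?_
  rw [mul_assoc]
  refine mul_le_mul_of_nonneg_left ?_ (ContinuousLinearMap.opNorm_nonneg _)
  have hm : (0:ℝ) ≤ max 1 ‖x‖ := le_trans zero_le_one (le_max_left _ _)
  have hsum : ∑ i ∈ Finset.range (j + 1), (j.choose i : ℝ) *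
      ‖iteratedFDeriv ℝ i (fun y : E => y) x‖ * ‖iteratedFDeriv ℝ (j - i) (fun y : E => y) x‖ ≤
      ∑ i ∈ Finset.range (j + 1), (j.choose i : ℝ) * (max 1 ‖x‖ * max 1 ‖x‖) := by
    refine Finset.sum_le_sum fun i _ => ?_
    have h1 := idDerivBound i x
    have h2 := idDerivBound (j - i) x
    rw [mul_assoc]
    refine mul_le_mul_of_nonneg_left ?_ (by positivity)
    exact mul_le_mul h1 h2 (norm_nonneg _) hm
  refine hsum.trans ?_
  rw [← Finset.sum_mul]
  have hc : (∑ i ∈ Finset.range (j + 1), (j.choose i : ℝ)) = 2 ^ j := by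
    exact_mod_cast congrArg (Nat.cast : ℕ → ℝ) (Nat.sum_range_choose j)
  rw [hc, sq]

lemma expDerivNorm (j : ℕ) (y : ℝ) : ‖iteratedFDeriv ℝ j Real.exp y‖ = Real.exp y := by
  rw [norm_iteratedFDeriv_eq_norm_iteratedDeriv, iteratedDeriv_eq_iterate, Real.iter_deriv_exp]
  exact abs_of_pos (Real.exp_pos y)

end Aux2

section Aux3

variable {E : Type*} [NormedAddCommGroup E] [InnerProductSpace ℝ E]

lemma gDerivBound (t a b : ℝ) (ht : 0 ≤ t) (ha : 0 ≤ a) (l L : ℕ) (hl : l ≤ L) (x : E)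
    (hx1 : a ≤ ‖x‖) (hx2 : ‖x‖ ≤ b) :
    ‖iteratedFDeriv ℝ l (fun y : E => Real.exp (-(t * ‖y‖ ^ 2))) x‖ ≤
      (L.factorial : ℝ) * Real.exp (-(t * a ^ 2)) *
        (1 + (‖(innerSL ℝ : E →L[ℝ] E →L[ℝ] ℝ)‖ * 2 ^ L * (1 + b) ^ 2) * t) ^ L := by
  set cB : ℝ := ‖(innerSL ℝ : E →L[ℝ] E →L[ℝ] ℝ)‖ * 2 ^ L * (1 + b) ^ 2 with hcB
  have hb : 0 ≤ b := le_trans ha (le_trans hx1 hx2)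
  have hcB0 : 0 ≤ cB := by positivity
  set Dt : ℝ := 1 + cB * t with hDt
  have hDt1 : 1 ≤ Dt := le_add_of_nonneg_right (by positivity)
  have hcomp : (fun y : E => Real.exp (-(t * ‖y‖ ^ 2))) =
      Real.exp ∘ (fun y : E => -(t * ‖y‖ ^ 2)) := rfl
  have hq : ContDiff ℝ (⊤ : ℕ∞) (fun y : E => -(t * ‖y‖ ^ 2)) :=
    (contDiff_const.mul (contDiff_norm_sq ℝ)).neg
  have hC : ∀ i, i ≤ l → ‖iteratedFDeriv ℝ i Real.exp (-(t * ‖x‖ ^ 2))‖ ≤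
      Real.exp (-(t * a ^ 2)) := by
    intro i _
    rw [expDerivNorm]
    refine Real.exp_le_exp.2 (neg_le_neg ?_)
    exact mul_le_mul_of_nonneg_left (by nlinarith) ht
  have hD : ∀ i, 1 ≤ i → i ≤ l → ‖iteratedFDeriv ℝ i (fun y : E => -(t * ‖y‖ ^ 2)) x‖ ≤
      Dt ^ i := by
    intro i hi1 hil
    have hrw : (fun y : E => -(t * ‖y‖ ^ 2)) = (-t) • (fun y : E => ‖y‖ ^ 2) := by
      funext y; simp [neg_mul]
    rw [hrw, iteratedFDeriv_const_smul_apply (contDiff_norm_sq ℝ (n := (i : WithTop ℕ∞))).contDiffAt]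
    refine le_trans (ContinuousMultilinearMap.opNorm_smul_le (-t : ℝ)
      (iteratedFDeriv ℝ i (fun y : E => ‖y‖ ^ 2) x)) ?_
    have h1 : ‖(-t : ℝ)‖ = t := by rw [norm_neg, Real.norm_eq_abs, abs_of_nonneg ht]
    rw [h1]
    have h2 := nsqDerivBound (E := E) i x
    have hmax : max 1 ‖x‖ ≤ 1 + b := by
      refine max_le (by linarith) (by linarith)
    have h3 : ‖iteratedFDeriv ℝ i (fun y : E => ‖y‖ ^ 2) x‖ ≤ cB := by
      refine h2.trans ?_
      rw [hcB]
      have hmax0 : (0:ℝ) ≤ max 1 ‖x‖ := le_trans zero_le_one (le_max_left _ _)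
      have : (2:ℝ) ^ i ≤ 2 ^ L := by
        exact pow_le_pow_right₀ one_le_two (hil.trans hl)
      exact mul_le_mul (mul_le_mul le_rfl this (by positivity) (ContinuousLinearMap.opNorm_nonneg _))
        (pow_le_pow_left₀ hmax0 hmax 2) (by positivity) (by positivity)
    calc t * ‖iteratedFDeriv ℝ i (fun y : E => ‖y‖ ^ 2) x‖ ≤ t * cB :=
          mul_le_mul_of_nonneg_left h3 ht
      _ ≤ Dt := by rw [hDt]; linarith [mul_comm t cB]
      _ ≤ Dt ^ i := le_self_pow₀ hDt1 (by omega)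
  have hmain := norm_iteratedFDeriv_comp_le (𝕜 := ℝ) (g := Real.exp)
    (f := fun y : E => -(t * ‖y‖ ^ 2)) (n := l) (N := ((⊤:ℕ∞) : WithTop ℕ∞))
    Real.contDiff_exp hq (by exact_mod_cast le_top) x hC hD
  rw [hcomp]
  refine hmain.trans ?_
  have hf : (l.factorial : ℝ) ≤ L.factorial := by exact_mod_cast Nat.factorial_le hl
  have hDl : Dt ^ l ≤ Dt ^ L := pow_le_pow_right₀ hDt1 hl
  have he : 0 < Real.exp (-(t * a ^ 2)) := Real.exp_pos _
  calc (l.factorial : ℝ) * Real.exp (-(t * a ^ 2)) * Dt ^ l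
      ≤ (L.factorial : ℝ) * Real.exp (-(t * a ^ 2)) * Dt ^ L := by
        have h0 : (0:ℝ) ≤ Dt ^ l := by positivity
        refine mul_le_mul (mul_le_mul hf le_rfl he.le (by positivity)) hDl h0 (by positivity)
    _ = _ := rfl

open SchwartzMap in
noncomputable def heatSchwartz {E : Type*} [NormedAddCommGroup E] [InnerProductSpace ℝ E]
    (t : ℝ) (F : SchwartzMap E ℂ) (hF : HasCompactSupport ⇑F) : SchwartzMap E ℂ where
  toFun := fun x => Real.exp (-(t * ‖x‖ ^ 2)) • F x
  smooth' := by
    have h1 : ContDiff ℝ (⊤:ℕ∞) fun x : E => Real.exp (-(t * ‖x‖ ^ 2)) :=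
      Real.contDiff_exp.comp ((contDiff_const.mul (contDiff_norm_sq ℝ)).neg)
    exact h1.smul F.smooth'
  decay' := by
    intro k m
    have h1 : ContDiff ℝ (⊤:ℕ∞) fun x : E => Real.exp (-(t * ‖x‖ ^ 2)) • F x :=
      (Real.contDiff_exp.comp ((contDiff_const.mul (contDiff_norm_sq ℝ)).neg)).smul F.smooth'
    have hsupp : HasCompactSupport fun x : E => Real.exp (-(t * ‖x‖ ^ 2)) • F x :=
      HasCompactSupport.smul_left (f := fun x : E => Real.exp (-(t * ‖x‖ ^ 2))) hF
    have h2 : HasCompactSupport (iteratedFDeriv ℝ m fun x : E => Real.exp (-(t * ‖x‖ ^ 2)) • F x) :=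
      hsupp.iteratedFDeriv m
    have hcont : Continuous fun x : E =>
        ‖x‖ ^ k * ‖iteratedFDeriv ℝ m (fun x : E => Real.exp (-(t * ‖x‖ ^ 2)) • F x) x‖ :=
      ((continuous_norm.pow k).mul ((h1.continuous_iteratedFDeriv
        (by exact_mod_cast le_top)).norm))
    have h3 : HasCompactSupport fun x : E =>
        ‖x‖ ^ k * ‖iteratedFDeriv ℝ m (fun x : E => Real.exp (-(t * ‖x‖ ^ 2)) • F x) x‖ := by
      have := (h2.comp_left (g := fun z => ‖z‖) norm_zero)
      exact HasCompactSupport.mul_left this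
    obtain ⟨C, hC⟩ := h3.exists_bound_of_continuous hcont
    refine ⟨C, fun x => ?_⟩
    have h4 := hC x
    rw [Real.norm_eq_abs] at h4
    exact (le_abs_self _).trans h4

@[simp] lemma heatSchwartz_apply {E : Type*} [NormedAddCommGroup E] [InnerProductSpace ℝ E]
    (t : ℝ) (F : SchwartzMap E ℂ) (hF : HasCompactSupport ⇑F) (x : E) :
    heatSchwartz t F hF x = Real.exp (-(t * ‖x‖ ^ 2)) • F x := rfl

lemma heatSchwartz_seminorm_bound {E : Type*} [NormedAddCommGroup E] [InnerProductSpace ℝ E]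
    (a b t : ℝ) (ha : 0 < a) (hb : a ≤ b) (ht : 0 ≤ t) (F : SchwartzMap E ℂ)
    (hFs : tsupport ⇑F ⊆ {x : E | a ≤ ‖x‖ ∧ ‖x‖ ≤ b}) (hF : HasCompactSupport ⇑F)
    (k l K L : ℕ) (hk : k ≤ K) (hl : l ≤ L) :
    SchwartzMap.seminorm ℝ k l (heatSchwartz t F hF) ≤
      ((1 + b) ^ K * (2 ^ L * (L.factorial : ℝ) *
          (∑ j ∈ Finset.range (L + 1), SchwartzMap.seminorm ℝ 0 j F))) *
        Real.exp (-(t * a ^ 2)) *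
        (1 + (‖(innerSL ℝ : E →L[ℝ] E →L[ℝ] ℝ)‖ * 2 ^ L * (1 + b) ^ 2) * t) ^ L := by
  have hb0 : (0:ℝ) ≤ b := le_trans ha.le hb
  set MF : ℝ := ∑ j ∈ Finset.range (L + 1), SchwartzMap.seminorm ℝ 0 j F with hMF
  have hMF0 : 0 ≤ MF := Finset.sum_nonneg fun j _ => apply_nonneg _ _
  set cB : ℝ := ‖(innerSL ℝ : E →L[ℝ] E →L[ℝ] ℝ)‖ * 2 ^ L * (1 + b) ^ 2 with hcB
  have hcB0 : 0 ≤ cB := by positivity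
  set Dt : ℝ := 1 + cB * t with hDt
  have hDt1 : (1:ℝ) ≤ Dt := le_add_of_nonneg_right (by positivity)
  have hDt0 : (0:ℝ) < Dt := lt_of_lt_of_le one_pos hDt1
  set M : ℝ := ((1 + b) ^ K * (2 ^ L * (L.factorial : ℝ) * MF)) *
      Real.exp (-(t * a ^ 2)) * Dt ^ L with hM
  have hM0 : 0 ≤ M := by positivity
  refine SchwartzMap.seminorm_le_bound ℝ k l _ hM0 fun x => ?_
  have hgsm : ContDiff ℝ (⊤:ℕ∞) fun y : E => Real.exp (-(t * ‖y‖ ^ 2)) :=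
    Real.contDiff_exp.comp ((contDiff_const.mul (contDiff_norm_sq ℝ)).neg)
  by_cases hx : a ≤ ‖x‖ ∧ ‖x‖ ≤ b
  · have h1 : ‖x‖ ^ k ≤ (1 + b) ^ K := by
      calc ‖x‖ ^ k ≤ (1 + b) ^ k := pow_le_pow_left₀ (norm_nonneg _) (by linarith [hx.2]) k
        _ ≤ (1 + b) ^ K := pow_le_pow_right₀ (by linarith) hk
    have h2 : ‖iteratedFDeriv ℝ l (⇑(heatSchwartz t F hF)) x‖ ≤
        2 ^ L * (L.factorial : ℝ) * MF * Real.exp (-(t * a ^ 2)) * Dt ^ L := by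
      have hsmul := norm_iteratedFDeriv_smul_le (𝕜 := ℝ) (𝕜' := ℝ)
        (f := fun y : E => Real.exp (-(t * ‖y‖ ^ 2))) (g := ⇑F)
        hgsm F.smooth' x (n := l) (by exact_mod_cast le_top)
      have hcoe : ⇑(heatSchwartz t F hF) = fun y : E => Real.exp (-(t * ‖y‖ ^ 2)) • F y := rfl
      rw [hcoe]
      refine hsmul.trans ?_
      have hterm : ∀ i ∈ Finset.range (l + 1),
          (l.choose i : ℝ) * ‖iteratedFDeriv ℝ i (fun y : E => Real.exp (-(t * ‖y‖ ^ 2))) x‖ *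
            ‖iteratedFDeriv ℝ (l - i) (⇑F) x‖ ≤
          (l.choose i : ℝ) * ((L.factorial : ℝ) * Real.exp (-(t * a ^ 2)) * Dt ^ L * MF) := by
        intro i hi
        rw [Finset.mem_range] at hi
        have hg := gDerivBound t a b ht ha.le i L (le_trans (by omega) hl) x hx.1 hx.2
        have hFd : ‖iteratedFDeriv ℝ (l - i) (⇑F) x‖ ≤ MF := by
          refine le_trans (SchwartzMap.norm_iteratedFDeriv_le_seminorm ℝ F (l - i) x) ?_
          rw [hMF]
          exact Finset.single_le_sum (f := fun j => (SchwartzMap.seminorm ℝ 0 j F : ℝ))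
            (fun j _ => apply_nonneg _ _) (Finset.mem_range.2 (by omega))
        have hprod : ‖iteratedFDeriv ℝ i (fun y : E => Real.exp (-(t * ‖y‖ ^ 2))) x‖ *
            ‖iteratedFDeriv ℝ (l - i) (⇑F) x‖ ≤
            (L.factorial : ℝ) * Real.exp (-(t * a ^ 2)) * Dt ^ L * MF :=
          mul_le_mul hg hFd (norm_nonneg _) (by positivity)
        calc (l.choose i : ℝ) * ‖iteratedFDeriv ℝ i (fun y : E => Real.exp (-(t * ‖y‖ ^ 2))) x‖ *
            ‖iteratedFDeriv ℝ (l - i) (⇑F) x‖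
            = (l.choose i : ℝ) * (‖iteratedFDeriv ℝ i (fun y : E => Real.exp (-(t * ‖y‖ ^ 2))) x‖ *
              ‖iteratedFDeriv ℝ (l - i) (⇑F) x‖) := by ring
          _ ≤ (l.choose i : ℝ) * ((L.factorial : ℝ) * Real.exp (-(t * a ^ 2)) * Dt ^ L * MF) :=
              mul_le_mul_of_nonneg_left hprod (by positivity)
      refine le_trans (Finset.sum_le_sum hterm) ?_
      rw [← Finset.sum_mul]
      have hc : (∑ i ∈ Finset.range (l + 1), (l.choose i : ℝ)) = 2 ^ l := by
        exact_mod_cast congrArg (Nat.cast : ℕ → ℝ) (Nat.sum_range_choose l)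
      rw [hc]
      have h2l : (2:ℝ) ^ l ≤ 2 ^ L := pow_le_pow_right₀ one_le_two hl
      calc (2:ℝ) ^ l * ((L.factorial : ℝ) * Real.exp (-(t * a ^ 2)) * Dt ^ L * MF)
          ≤ 2 ^ L * ((L.factorial : ℝ) * Real.exp (-(t * a ^ 2)) * Dt ^ L * MF) := by
            refine mul_le_mul_of_nonneg_right h2l (by positivity)
        _ = 2 ^ L * (L.factorial : ℝ) * MF * Real.exp (-(t * a ^ 2)) * Dt ^ L := by ring
    calc ‖x‖ ^ k * ‖iteratedFDeriv ℝ l (⇑(heatSchwartz t F hF)) x‖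
        ≤ (1 + b) ^ K * (2 ^ L * (L.factorial : ℝ) * MF * Real.exp (-(t * a ^ 2)) * Dt ^ L) :=
          mul_le_mul h1 h2 (by positivity) (by positivity)
      _ = M := by rw [hM]; ring
  · have hns : x ∉ tsupport (iteratedFDeriv ℝ l (⇑(heatSchwartz t F hF))) := by
      intro hmem
      have h1 : tsupport (⇑(heatSchwartz t F hF)) ⊆ tsupport ⇑F := by
        refine closure_minimal ?_ (isClosed_tsupport _)
        intro y hy
        by_contra hyF
        have hFy : F y = 0 := image_eq_zero_of_notMem_tsupport hyF
        have : (heatSchwartz t F hF) y = 0 := by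
          rw [heatSchwartz_apply, hFy, smul_zero]
        exact hy this
      have := tsupport_iteratedFDeriv_subset (𝕜 := ℝ) (f := ⇑(heatSchwartz t F hF)) l hmem
      exact hx (hFs (h1 this))
    rw [image_eq_zero_of_notMem_tsupport hns]
    simpa using hM0

lemma poly_exp_bound (a cB : ℝ) (ha : 0 < a) (hcB : 0 ≤ cB) (L : ℕ) :
    ∃ K2 : ℝ, 0 < K2 ∧ ∀ t, 0 ≤ t →
      (1 + cB * t) ^ L * Real.exp (-(t * a ^ 2)) ≤ K2 * Real.exp (-(a ^ 2 / 2 * t)) := by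
  set s' : ℝ := a ^ 2 / (2 * (L + 1)) with hs'
  have hs'0 : 0 < s' := by positivity
  refine ⟨((1 + cB) * (1 + 1 / s')) ^ L, by positivity, fun t ht => ?_⟩
  have h1 : 1 + cB * t ≤ (1 + cB) * (1 + t) := by nlinarith
  have h2 : 1 + t ≤ (1 + 1 / s') * Real.exp (s' * t) := by
    have he1 : (1:ℝ) ≤ Real.exp (s' * t) := Real.one_le_exp (by positivity)
    have he2 : s' * t ≤ Real.exp (s' * t) := le_trans (by linarith [Real.add_one_le_exp (s' * t)])
      le_rfl
    have ht' : t ≤ Real.exp (s' * t) / s' := by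
      rw [le_div_iff₀ hs'0]; nlinarith
    calc 1 + t ≤ Real.exp (s' * t) + Real.exp (s' * t) / s' := by linarith
      _ = (1 + 1 / s') * Real.exp (s' * t) := by field_simp
  have h3 : (1 + cB * t) ^ L ≤ ((1 + cB) * (1 + 1 / s')) ^ L * Real.exp ((L : ℝ) * (s' * t)) := by
    have h4 : (1 + cB * t) ^ L ≤ ((1 + cB) * ((1 + 1 / s') * Real.exp (s' * t))) ^ L := by
      refine pow_le_pow_left₀ (by positivity) ?_ L
      exact h1.trans (mul_le_mul_of_nonneg_left h2 (by positivity))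
    refine h4.trans_eq ?_
    rw [Real.exp_nat_mul, ← mul_pow, mul_assoc]
  have h5 : (L : ℝ) * (s' * t) - t * a ^ 2 ≤ -(a ^ 2 / 2 * t) := by
    have : (L : ℝ) * s' ≤ a ^ 2 / 2 := by
      rw [hs', mul_div_assoc', div_le_div_iff₀ (by positivity) (by norm_num)]
      nlinarith [sq_nonneg a]
    nlinarith [mul_le_mul_of_nonneg_right this ht]
  calc (1 + cB * t) ^ L * Real.exp (-(t * a ^ 2))
      ≤ ((1 + cB) * (1 + 1 / s')) ^ L * Real.exp ((L : ℝ) * (s' * t)) *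
        Real.exp (-(t * a ^ 2)) := mul_le_mul_of_nonneg_right h3 (Real.exp_pos _).le
    _ = ((1 + cB) * (1 + 1 / s')) ^ L * Real.exp ((L : ℝ) * (s' * t) - t * a ^ 2) := by
        rw [mul_assoc, ← Real.exp_add]; ring_nf
    _ ≤ ((1 + cB) * (1 + 1 / s')) ^ L * Real.exp (-(a ^ 2 / 2 * t)) := by
        refine mul_le_mul_of_nonneg_left (Real.exp_le_exp.2 h5) (by positivity)


theorem heat_annulus_decay (n : ℕ) (hn : 1 ≤ n) (a b : ℝ) (ha : 0 < a) (hab : a < b)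
    (N : ℕ) (ψ : SchwartzMap (EuclideanSpace ℝ (Fin n)) ℂ)
    (hsupp : ∀ ξ : EuclideanSpace ℝ (Fin n), (‖ξ‖ < a ∨ b < ‖ξ‖) →
      FourierTransform.fourier (⇑ψ) ξ = 0) :
    ∃ C c : ℝ, 0 < C ∧ 0 < c ∧
      ∀ t : ℝ, 0 ≤ t → ∀ x : EuclideanSpace ℝ (Fin n),
        ‖∫ ξ : EuclideanSpace ℝ (Fin n),
            Real.exp (-(t * ‖ξ‖ ^ 2)) •
              (FourierTransform.fourier (⇑ψ) ξ *
                Complex.exp (2 * (Real.pi : ℂ) * Complex.I * ((inner ℝ x ξ : ℝ) : ℂ)))‖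
          ≤ C * Real.exp (-(c * t)) * (1 + ‖x‖) ^ (-(N : ℝ)) := by
  classical
  set E := EuclideanSpace ℝ (Fin n) with hE
  set F : SchwartzMap E ℂ := SchwartzMap.fourierTransformCLM ℝ ψ with hFdef
  have hFcoe : ⇑F = 𝓕 ⇑ψ := by
    rw [hFdef, SchwartzMap.fourierTransformCLM_apply, SchwartzMap.fourier_coe]
  -- support of F
  have hFs : tsupport ⇑F ⊆ {x : E | a ≤ ‖x‖ ∧ ‖x‖ ≤ b} := by
    refine closure_minimal ?_ ?_
    · intro y hy
      by_contra hyS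
      refine hy ?_
      rw [hFcoe]
      refine hsupp y ?_
      simp only [Set.mem_setOf_eq, not_and_or, not_le] at hyS
      tauto
    · exact (isClosed_le continuous_const continuous_norm).inter
        (isClosed_le continuous_norm continuous_const)
  have hScompact : IsCompact {x : E | a ≤ ‖x‖ ∧ ‖x‖ ≤ b} := by
    have h1 : {x : E | a ≤ ‖x‖ ∧ ‖x‖ ≤ b} ⊆ Metric.closedBall 0 b := by
      intro y hy; simpa [Metric.mem_closedBall, dist_eq_norm] using hy.2
    refine (isCompact_closedBall (0:E) b).of_isClosed_subset ?_ h1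
    exact (isClosed_le continuous_const continuous_norm).inter
      (isClosed_le continuous_norm continuous_const)
  have hFcs : HasCompactSupport ⇑F :=
    HasCompactSupport.of_support_subset_isCompact hScompact
      (subset_trans subset_closure hFs)
  -- the family of Schwartz functions
  set Φ : ℝ → SchwartzMap E ℂ := fun t => heatSchwartz t F hFcs with hΦdef
  set p : SeminormFamily ℝ (SchwartzMap E ℂ) (ℕ × ℕ) := schwartzSeminormFamily ℝ E ℂ with hp
  set T : SchwartzMap E ℂ →L[ℝ] SchwartzMap E ℂ := SchwartzMap.fourierTransformCLM ℝ with hT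
  -- continuity bounds for the Fourier transform CLM
  have hqc : ∀ i : ℕ × ℕ, ∃ s : Finset (ℕ × ℕ), ∃ C : NNReal, C ≠ 0 ∧
      ∀ f : SchwartzMap E ℂ, p i (T f) ≤ C * (s.sup p) f := by
    intro i
    have hq : Continuous ⇑((p i).comp (T : SchwartzMap E ℂ →ₗ[ℝ] SchwartzMap E ℂ)) := by
      have h1 : ⇑((p i).comp (T : SchwartzMap E ℂ →ₗ[ℝ] SchwartzMap E ℂ)) =
          fun f => p i (T f) := rfl
      rw [h1]
      exact ((schwartz_withSeminorms ℝ E ℂ).continuous_seminorm i).comp T.continuous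
    obtain ⟨s, C, hC0, hC⟩ := Seminorm.bound_of_continuous (schwartz_withSeminorms ℝ E ℂ)
      ((p i).comp (T : SchwartzMap E ℂ →ₗ[ℝ] SchwartzMap E ℂ)) hq
    refine ⟨s, C, hC0, fun f => ?_⟩
    have h2 : ((p i).comp (T : SchwartzMap E ℂ →ₗ[ℝ] SchwartzMap E ℂ)) f ≤
        (C • s.sup (schwartzSeminormFamily ℝ E ℂ)) f := hC f
    rw [Seminorm.comp_apply, Seminorm.smul_apply, NNReal.smul_def, smul_eq_mul] at h2
    exact h2
  choose sF CF hCF0 hCF using hqc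
  set bigs : Finset (ℕ × ℕ) := (Finset.Iic ((N, 0) : ℕ × ℕ)).biUnion sF with hbigs
  set bigC : NNReal := (Finset.Iic ((N, 0) : ℕ × ℕ)).sup CF with hbigC
  set L : ℕ := bigs.sup Prod.snd with hL
  set Kk : ℕ := bigs.sup Prod.fst with hKk
  set MF : ℝ := ∑ j ∈ Finset.range (L + 1), SchwartzMap.seminorm ℝ 0 j F with hMF
  have hMF0 : 0 ≤ MF := Finset.sum_nonneg fun j _ => apply_nonneg _ _
  set cB : ℝ := ‖(innerSL ℝ : E →L[ℝ] E →L[ℝ] ℝ)‖ * 2 ^ L * (1 + b) ^ 2 with hcB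
  have hcB0 : 0 ≤ cB := mul_nonneg (mul_nonneg (ContinuousLinearMap.opNorm_nonneg _)
    (by positivity)) (by positivity)
  set Msem : ℝ := (1 + b) ^ Kk * (2 ^ L * (L.factorial : ℝ) * MF) with hMsem
  have hb0 : (0:ℝ) < b := lt_trans ha hab
  have hMsem0 : 0 ≤ Msem := mul_nonneg (pow_nonneg (by linarith) _)
    (mul_nonneg (by positivity) hMF0)
  obtain ⟨K2, hK20, hK2⟩ := poly_exp_bound a cB ha hcB0 L
  set Ctot : ℝ := 2 ^ N * (bigC : ℝ) * Msem * K2 + 1 with hCtot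
  have hCtotAux : 0 ≤ 2 ^ N * (bigC : ℝ) * Msem * K2 :=
    mul_nonneg (mul_nonneg (mul_nonneg (by positivity) (NNReal.coe_nonneg _)) hMsem0) hK20.le
  have hCtot0 : 0 < Ctot := by rw [hCtot]; linarith
  refine ⟨Ctot, a ^ 2 / 2, hCtot0, by positivity, fun t ht x => ?_⟩
  -- seminorm bound for Φ t
  have hΦb : ∀ i ∈ bigs, p i (Φ t) ≤ Msem * Real.exp (-(t * a ^ 2)) * (1 + cB * t) ^ L := by
    intro i hi
    have hk : i.1 ≤ Kk := Finset.le_sup (f := Prod.fst) hi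
    have hl : i.2 ≤ L := Finset.le_sup (f := Prod.snd) hi
    exact heatSchwartz_seminorm_bound a b t ha hab.le ht F hFs hFcs i.1 i.2 Kk L hk hl
  have hDt1 : (1:ℝ) ≤ 1 + cB * t := le_add_of_nonneg_right (by positivity)
  have hsup : (bigs.sup p) (Φ t) ≤ Msem * Real.exp (-(t * a ^ 2)) * (1 + cB * t) ^ L :=
    Seminorm.finset_sup_apply_le (by positivity) hΦb
  -- bound the (N,0)-sup of T (Φ t)
  have hTb : ((Finset.Iic ((N, 0) : ℕ × ℕ)).sup p) (T (Φ t)) ≤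
      (bigC : ℝ) * (Msem * Real.exp (-(t * a ^ 2)) * (1 + cB * t) ^ L) := by
    refine Seminorm.finset_sup_apply_le (by positivity) fun i hi => ?_
    have h1 := hCF i (Φ t)
    have h2 : ((sF i).sup p) (Φ t) ≤ (bigs.sup p) (Φ t) := by
      have hmono : (sF i).sup p ≤ bigs.sup p :=
        Finset.sup_mono (Finset.subset_biUnion_of_mem sF hi)
      exact hmono (Φ t)
    have h3 : (CF i : ℝ) ≤ (bigC : ℝ) := by
      exact_mod_cast Finset.le_sup (f := CF) hi
    calc p i (T (Φ t)) ≤ (CF i : ℝ) * ((sF i).sup p) (Φ t) := h1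
      _ ≤ (bigC : ℝ) * (Msem * Real.exp (-(t * a ^ 2)) * (1 + cB * t) ^ L) := by
          refine mul_le_mul h3 (h2.trans hsup) (apply_nonneg _ _) (by positivity)
  -- identify the integral with the Fourier transform of Φ t at -x
  have hIeq : (∫ ξ : E, Real.exp (-(t * ‖ξ‖ ^ 2)) •
        (𝓕 (⇑ψ) ξ *
          Complex.exp (2 * (Real.pi : ℂ) * Complex.I * ((inner ℝ x ξ : ℝ) : ℂ)))) =
      𝓕 ⇑(Φ t) (-x) := by
    rw [Real.fourier_eq]
    congr 1
    funext ξ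
    rw [hΦdef, heatSchwartz_apply, hFcoe]
    rw [inner_neg_right, neg_neg, Circle.smul_def, Real.fourierChar_apply]
    simp only [Complex.real_smul, real_inner_comm ξ x]
    push_cast
    simp only [smul_eq_mul]
    ring_nf
  have hTcoe : ⇑(T (Φ t)) = 𝓕 ⇑(Φ t) := by
    rw [hT, SchwartzMap.fourierTransformCLM_apply, SchwartzMap.fourier_coe]
  -- key decay estimate
  have hkey : (1 + ‖x‖) ^ N * ‖(T (Φ t)) (-x)‖ ≤
      2 ^ N * ((Finset.Iic ((N, 0) : ℕ × ℕ)).sup p) (T (Φ t)) := by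
    have h1 := SchwartzMap.one_add_le_sup_seminorm_apply (𝕜 := ℝ) (m := ((N, 0) : ℕ × ℕ))
      le_rfl le_rfl (T (Φ t)) (-x)
    exact (by simpa [norm_neg, norm_iteratedFDeriv_zero] using h1 : _ ≤ 2 ^ N * ((Finset.Iic ((N, 0) : ℕ × ℕ)).sup fun m => SchwartzMap.seminorm ℝ m.1 m.2) (T (Φ t)))
  -- put everything together
  have hP : (0:ℝ) < (1 + ‖x‖) ^ N := by positivity
  have hrpow : ((1:ℝ) + ‖x‖) ^ (-(N : ℝ)) = ((1 + ‖x‖) ^ N)⁻¹ := by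
    rw [Real.rpow_neg (by positivity), Real.rpow_natCast]
  rw [hIeq, ← hTcoe, hrpow, ← div_eq_mul_inv, le_div_iff₀ hP]
  have hchain : ‖(T (Φ t)) (-x)‖ * (1 + ‖x‖) ^ N ≤
      2 ^ N * ((bigC : ℝ) * (Msem * Real.exp (-(t * a ^ 2)) * (1 + cB * t) ^ L)) := by
    rw [mul_comm]
    refine hkey.trans ?_
    exact mul_le_mul_of_nonneg_left hTb (by positivity)
  refine hchain.trans ?_
  have h6 : (1 + cB * t) ^ L * Real.exp (-(t * a ^ 2)) ≤ K2 * Real.exp (-(a ^ 2 / 2 * t)) :=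
    hK2 t ht
  calc 2 ^ N * ((bigC : ℝ) * (Msem * Real.exp (-(t * a ^ 2)) * (1 + cB * t) ^ L))
      = 2 ^ N * (bigC : ℝ) * Msem * ((1 + cB * t) ^ L * Real.exp (-(t * a ^ 2))) := by ring
    _ ≤ 2 ^ N * (bigC : ℝ) * Msem * (K2 * Real.exp (-(a ^ 2 / 2 * t))) := by
        refine mul_le_mul_of_nonneg_left h6 (by positivity)
    _ = (2 ^ N * (bigC : ℝ) * Msem * K2) * Real.exp (-(a ^ 2 / 2 * t)) := by ring
    _ ≤ Ctot * Real.exp (-(a ^ 2 / 2 * t)) := by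
        refine mul_le_mul_of_nonneg_right ?_ (Real.exp_pos _).le
        rw [hCtot]; linarith
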